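/- Let S = {z ∈ ℂ^m : ‖|z| − b‖₂ ≤ ε} with b ∈ ℝ^m, b ≥ 0, ε ≥ 0, where |z| denotes componentwise modulus. Given s ∈ ℂ^m with all s_i ≠ 0 and ‖|s| − b‖₂ > ε, the point z* with z*_i = (θ|s_i| + (1−θ)b_i)·sgn(s_i), where θ = ε/‖|s| − b‖₂, lies in S and satisfies ‖z* − s‖₂ ≤ ‖z − s‖₂ for all z ∈ S; i.e., z* is a Euclidean projection of s onto S. -/

import Mathlib

open Finset Complex

/-- Projection onto the nonconvex tube `S = {z : ‖|z| − b‖₂ ≤ ε}`: when `s` has no zero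
components and lies outside `S`, the point `z*` with
`z*_i = (θ|s_i| + (1−θ)b_i)·sgn(s_i)`, `θ = ε/‖|s|−b‖₂`, belongs to `S` and is a
Euclidean projection of `s` onto `S`. -/
theorem projection_onto_magnitude_tube {m : ℕ} (b : Fin m → ℝ) (hb : ∀ i, 0 ≤ b i)
    (eps : ℝ) (heps : 0 ≤ eps) (s : Fin m → ℂ) (hs : ∀ i, s i ≠ 0)
    (hfar : eps < Real.sqrt (∑ i, (‖s i‖ - b i) ^ 2))
    (theta : ℝ) (htheta : theta = eps / Real.sqrt (∑ i, (‖s i‖ - b i) ^ 2))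
    (zstar : Fin m → ℂ)
    (hzstar : ∀ i, zstar i =
      (((theta * ‖s i‖ + (1 - theta) * b i : ℝ)) : ℂ) * (s i / ‖s i‖)) :
    Real.sqrt (∑ i, (‖zstar i‖ - b i) ^ 2) ≤ eps ∧
    ∀ z : Fin m → ℂ, Real.sqrt (∑ i, (‖z i‖ - b i) ^ 2) ≤ eps →
      Real.sqrt (∑ i, ‖zstar i - s i‖ ^ 2) ≤
        Real.sqrt (∑ i, ‖z i - s i‖ ^ 2) := by
  set d := Real.sqrt (∑ i, (‖s i‖ - b i) ^ 2) with hd_def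
  have hsum_nonneg : 0 ≤ ∑ i, (‖s i‖ - b i) ^ 2 :=
    Finset.sum_nonneg fun i _ => sq_nonneg _
  have hd_pos : 0 < d := lt_of_le_of_lt heps hfar
  have hd_sq : d ^ 2 = ∑ i, (‖s i‖ - b i) ^ 2 := Real.sq_sqrt hsum_nonneg
  have htheta_nonneg : 0 ≤ theta := htheta ▸ div_nonneg heps hd_pos.le
  have htheta_lt : theta ≤ 1 := by
    rw [htheta]; exact le_of_lt ((div_lt_one hd_pos).mpr hfar)
  have hθd : theta * d = eps := by rw [htheta]; field_simp
  have habs_unit : ∀ i, ‖s i / ‖s i‖‖ = 1 := fun i => by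
    rw [norm_div, Complex.norm_real, norm_norm, div_self (norm_ne_zero_iff.mpr (hs i))]
  have habs_zstar : ∀ i, ‖zstar i‖ = theta * ‖s i‖ + (1 - theta) * b i :=
    fun i => by
    rw [hzstar i, norm_mul, habs_unit, mul_one, Complex.norm_real, Real.norm_eq_abs, _root_.abs_of_nonneg]
    have h1 : 0 ≤ theta * ‖s i‖ :=
      mul_nonneg htheta_nonneg (norm_nonneg _)
    have h2 : 0 ≤ (1 - theta) * b i := mul_nonneg (by linarith) (hb i)
    linarith
  have hpart1 : Real.sqrt (∑ i, (‖zstar i‖ - b i) ^ 2) = eps := by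
    have h1 : ∑ i, (‖zstar i‖ - b i) ^ 2
        = (theta * d) ^ 2 := by
      rw [mul_pow, hd_sq, Finset.mul_sum]
      refine Finset.sum_congr rfl fun i _ => ?_
      rw [habs_zstar i]; ring
    rw [h1, Real.sqrt_sq (by positivity), hθd]
  have hzs : ∀ i, ‖zstar i - s i‖ ^ 2
      = (1 - theta) ^ 2 * (‖s i‖ - b i) ^ 2 := fun i => by
    have hsne : (‖s i‖ : ℂ) ≠ 0 :=
      Complex.ofReal_ne_zero.mpr (norm_ne_zero_iff.mpr (hs i))
    have key : zstar i - s i =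
        (((theta * ‖s i‖ + (1 - theta) * b i - ‖s i‖ : ℝ)) : ℂ)
          * (s i / ‖s i‖) := by
      rw [hzstar i]; field_simp; push_cast; ring
    rw [key, norm_mul, habs_unit, mul_one, Complex.norm_real, Real.norm_eq_abs, _root_.sq_abs]; ring
  have hdist_zstar : Real.sqrt (∑ i, ‖zstar i - s i‖ ^ 2) = d - eps := by
    have h1 : ∑ i, ‖zstar i - s i‖ ^ 2 = ((1 - theta) * d) ^ 2 := by
      rw [mul_pow, hd_sq, Finset.mul_sum]
      exact Finset.sum_congr rfl fun i _ => hzs i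
    have h2 : (1 - theta) * d = d - eps := by rw [sub_mul, one_mul, hθd]
    rw [h1, Real.sqrt_sq (by nlinarith), h2]
  refine ⟨le_of_eq hpart1, fun z hz => ?_⟩
  rw [hdist_zstar]
  -- reverse triangle inequality in Euclidean space
  have hnorm : ∀ x : EuclideanSpace ℝ (Fin m), ‖x‖ = Real.sqrt (∑ i, (x i) ^ 2) := by
    intro x
    rw [EuclideanSpace.norm_eq]
    congr 1
    exact Finset.sum_congr rfl fun i _ => by rw [Real.norm_eq_abs, _root_.sq_abs]
  set F : EuclideanSpace ℝ (Fin m) := WithLp.toLp 2 (fun i => ‖s i‖ - b i) with hF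
  set G : EuclideanSpace ℝ (Fin m) := WithLp.toLp 2 (fun i => ‖z i‖ - b i) with hG
  have hFnorm : ‖F‖ = d := by rw [hnorm]
  have hGnorm : ‖G‖ ≤ eps := by rw [hnorm]; exact hz
  have htri : ‖F‖ - ‖G‖ ≤ ‖F - G‖ := norm_sub_norm_le F G
  have hFG : ‖F - G‖ = Real.sqrt (∑ i, (‖s i‖ - ‖z i‖) ^ 2) := by
    rw [hnorm]
    congr 1
    refine Finset.sum_congr rfl fun i _ => ?_
    have : (F - G) i = F i - G i := rfl
    rw [this, hF, hG]; ring_nf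
  have hkey : d - eps ≤ Real.sqrt (∑ i, (‖s i‖ - ‖z i‖) ^ 2) := by
    rw [← hFG]; linarith [htri, hFnorm ▸ htri]
  refine le_trans hkey (Real.sqrt_le_sqrt (Finset.sum_le_sum fun i _ => ?_))
  have h1 : |‖s i‖ - ‖z i‖| ≤ ‖s i - z i‖ :=
    abs_norm_sub_norm_le (s i) (z i)
  have h2 : ‖s i - z i‖ = ‖z i - s i‖ := norm_sub_rev _ _
  calc (‖s i‖ - ‖z i‖) ^ 2
      = |‖s i‖ - ‖z i‖| ^ 2 := (_root_.sq_abs _).symm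
    _ ≤ ‖z i - s i‖ ^ 2 := by
        rw [← h2]; exact pow_le_pow_left₀ (abs_nonneg _) h1 2
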